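/- Let F be a finite field of characteristic p, let C be a linear code of length n over F with a permutation automorphism σ, and suppose every cycle of σ has length congruent to l modulo p, where l ≢ 0 (mod p). If C is a linear complementary dual (LCD) code with respect to the Euclidean inner product, then the projection code C_π = π(F_σ(C)) is also LCD. -/

import Mathlib

open Finset

/-- The action of a permutation `σ` on vectors by permuting coordinates: `(vσ) i = v (σ i)`. -/
def permAct {F : Type*} {n : ℕ} (σ : Equiv.Perm (Fin n)) (v : Fin n → F) : Fin n → F :=
  fun i => v (σ i)

open Classical in
/-- The cycle (orbit) of `σ` containing the coordinate `i`, as a `Finset`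
(fixed points are counted as cycles of length 1). -/
noncomputable def orbitOf {n : ℕ} (σ : Equiv.Perm (Fin n)) (i : Fin n) : Finset (Fin n) :=
  Finset.univ.filter (fun j => σ.SameCycle i j)

/-- The Euclidean inner product `u·v = ∑ i, u i * v i`. -/
def eInner {F : Type*} [Field F] {ι : Type*} [Fintype ι] (u v : ι → F) : F :=
  ∑ i, u i * v i

/-- The Euclidean dual of a set of vectors. -/
def dualSet {F : Type*} [Field F] {ι : Type*} [Fintype ι] (S : Set (ι → F)) : Set (ι → F) :=
  {u | ∀ v ∈ S, eInner u v = 0}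

/-- A set of vectors is self-orthogonal if it is contained in its dual. -/
def IsSelfOrthogonalSet {F : Type*} [Field F] {ι : Type*} [Fintype ι] (S : Set (ι → F)) : Prop :=
  S ⊆ dualSet S

/-- A set of vectors is self-dual if it equals its dual. -/
def IsSelfDualSet {F : Type*} [Field F] {ι : Type*} [Fintype ι] (S : Set (ι → F)) : Prop :=
  S = dualSet S

/-- A set of vectors is LCD (linear complementary dual) if it meets its dual only in `0`. -/
def IsLCDSet {F : Type*} [Field F] {ι : Type*} [Fintype ι] (S : Set (ι → F)) : Prop :=
  S ∩ dualSet S = {0}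

/-- The fixed subcode `F_σ(C) = {v ∈ C : vσ = v}`. -/
def fixedCode {F : Type*} [Field F] {n : ℕ} (σ : Equiv.Perm (Fin n))
    (C : Submodule F (Fin n → F)) : Set (Fin n → F) :=
  {v | v ∈ C ∧ permAct σ v = v}

/-- The subcode `E_σ(C) = {v ∈ C : the sum of the coordinates of v over each cycle of σ is 0}`. -/
def evenCode {F : Type*} [Field F] {n : ℕ} (σ : Equiv.Perm (Fin n))
    (C : Submodule F (Fin n → F)) : Set (Fin n → F) :=
  {v | v ∈ C ∧ ∀ i : Fin n, ∑ j ∈ orbitOf σ i, v j = 0}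

/-- The setoid on coordinates whose classes are the cycles (orbits) of `σ`. -/
def cycleSetoid {n : ℕ} (σ : Equiv.Perm (Fin n)) : Setoid (Fin n) :=
  ⟨σ.SameCycle, ⟨fun x => Equiv.Perm.SameCycle.refl σ x, fun h => h.symm, fun h h' => h.trans h'⟩⟩

/-- The set of cycles of `σ` (fixed points counted as cycles of length 1); if `σ` has `s`
cycles then `Cycles σ → F` is a copy of `F^s`. -/
abbrev Cycles {n : ℕ} (σ : Equiv.Perm (Fin n)) : Type :=
  Quotient (cycleSetoid σ)

noncomputable instance {n : ℕ} (σ : Equiv.Perm (Fin n)) : Fintype (Cycles σ) :=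
  @Fintype.ofFinite _ (Quotient.finite _)

/-- The projection `π` picking one coordinate from each cycle of `σ`; on a `σ`-fixed vector
this is the common value of the vector on each cycle. -/
noncomputable def projPi {F : Type*} {n : ℕ} (σ : Equiv.Perm (Fin n)) (v : Fin n → F) :
    Cycles σ → F :=
  fun c => v c.out


section Aux

variable {F : Type*} [Field F] {n : ℕ}

lemma fixed_pow_apply {σ : Equiv.Perm (Fin n)} {w : Fin n → F} (hw : permAct σ w = w)
    (k : ℕ) : ∀ i, w ((σ ^ k) i) = w i := by
  induction k with
  | zero => intro i; simp
  | succ k ih =>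
    intro i
    rw [pow_succ, Equiv.Perm.mul_apply]
    exact (ih (σ i)).trans (congrFun hw i)

lemma fixed_sameCycle {σ : Equiv.Perm (Fin n)} {w : Fin n → F} (hw : permAct σ w = w)
    {i j : Fin n} (hij : σ.SameCycle i j) : w i = w j := by
  obtain ⟨k, -, hkeq⟩ := hij.exists_pow_eq'
  rw [← hkeq, fixed_pow_apply hw]

lemma pow_orbit_card_apply (σ : Equiv.Perm (Fin n)) (i : Fin n) :
    (σ ^ (orbitOf σ i).card) i = i := by
  classical
  by_cases hi : σ i = i
  · exact Equiv.Perm.pow_apply_eq_self_of_apply_eq_self hi _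
  · have horb : orbitOf σ i = (σ.cycleOf i).support := by
      ext j
      simp only [orbitOf, Finset.mem_filter, Finset.mem_univ, true_and,
        Equiv.Perm.mem_support_cycleOf_iff]
      exact ⟨fun hj => ⟨hj, Equiv.Perm.mem_support.mpr hi⟩, fun hj => hj.1⟩
    rw [horb]
    have h2 := Equiv.Perm.pow_mod_card_support_cycleOf_self_apply σ
      ((σ.cycleOf i).support.card) i
    rw [Nat.mod_self, pow_zero, Equiv.Perm.one_apply] at h2
    exact h2.symm

lemma eInner_permAct {σ : Equiv.Perm (Fin n)} {w v : Fin n → F} (hw : permAct σ w = w) :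
    eInner w (permAct σ v) = eInner w v := by
  unfold eInner permAct
  calc ∑ i, w i * v (σ i) = ∑ i, w (σ i) * v (σ i) := by
        refine Finset.sum_congr rfl fun i _ => ?_
        have h3 : w (σ i) = w i := congrFun hw i
        rw [h3]
    _ = ∑ i, w i * v i := Equiv.sum_comp σ (fun i => w i * v i)

lemma permAct_pow_succ (σ : Equiv.Perm (Fin n)) (k : ℕ) (v : Fin n → F) :
    permAct (σ ^ (k + 1)) v = permAct σ (permAct (σ ^ k) v) := by
  funext i
  simp only [permAct, pow_succ, Equiv.Perm.mul_apply]

/-- Inner product of two `σ`-fixed vectors decomposes over the cycles of `σ`. -/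
lemma eInner_fixed (σ : Equiv.Perm (Fin n)) {u w : Fin n → F}
    (hu : permAct σ u = u) (hw : permAct σ w = w) :
    eInner u w = ∑ c : Cycles σ, ((orbitOf σ c.out).card : F) * (u c.out * w c.out) := by
  classical
  unfold eInner
  rw [← Finset.sum_fiberwise Finset.univ (Quotient.mk (cycleSetoid σ)) (fun i => u i * w i)]
  refine Finset.sum_congr rfl fun c _ => ?_
  have hfib : Finset.univ.filter (fun i => Quotient.mk (cycleSetoid σ) i = c)
      = orbitOf σ c.out := by
    ext j
    simp only [Finset.mem_filter, Finset.mem_univ, true_and, orbitOf]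
    constructor
    · intro hj
      have h1 : Quotient.mk (cycleSetoid σ) j = Quotient.mk (cycleSetoid σ) c.out := by
        rw [hj, Quotient.out_eq]
      exact (Quotient.exact h1 : σ.SameCycle j c.out).symm
    · intro hj
      rw [← Quotient.out_eq c]
      exact (Quotient.sound (hj.symm : σ.SameCycle j c.out) :
        Quotient.mk (cycleSetoid σ) j = Quotient.mk (cycleSetoid σ) c.out)
  rw [hfib]
  have : ∀ j ∈ orbitOf σ c.out, u j * w j = u c.out * w c.out := by
    intro j hj
    have hsc : σ.SameCycle c.out j := by
      simpa [orbitOf] using hj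
    rw [← fixed_sameCycle hu hsc, ← fixed_sameCycle hw hsc]
  rw [Finset.sum_congr rfl this, Finset.sum_const, nsmul_eq_mul]

end Aux

/-- Let `C` be a linear code over a finite field of characteristic `p` with
a permutation automorphism `σ`, all of whose cycles have length congruent to `l ≢ 0 (mod p)`.
If `C` is LCD with respect to the Euclidean inner product, then so is the projection
code `C_π = π(F_σ(C))`. -/
theorem proj_code_of_code {F : Type*} [Field F] [Fintype F] (p : ℕ) [CharP F p]
    {n : ℕ} (σ : Equiv.Perm (Fin n)) (C : Submodule F (Fin n → F))
    (hC : ∀ v, v ∈ C ↔ permAct σ v ∈ C)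
    (l : ℕ) (hl : ¬ l ≡ 0 [MOD p])
    (hcyc : ∀ i : Fin n, (orbitOf σ i).card ≡ l [MOD p])
    (h : IsLCDSet (C : Set (Fin n → F))) :
    IsLCDSet (projPi σ '' fixedCode σ C) := by
  classical
  have hp : p.Prime := CharP.char_is_prime F p
  have hlF : (l : F) ≠ 0 := by
    rw [Ne, CharP.cast_eq_zero_iff F p]
    exact fun hd => hl (Nat.modEq_zero_iff_dvd.mpr hd)
  set L := ∏ i : Fin n, (orbitOf σ i).card with hLdef
  have hLF : (L : F) ≠ 0 := by
    rw [Ne, CharP.cast_eq_zero_iff F p]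
    intro hd
    obtain ⟨i, -, hi⟩ := (hp.prime.dvd_finset_prod_iff _).mp hd
    exact hl ((hcyc i).symm.trans (Nat.modEq_zero_iff_dvd.mpr hi))
  have hfixL : ∀ j, (σ ^ L) j = j := by
    intro j
    obtain ⟨m, hm⟩ : (orbitOf σ j).card ∣ L := Finset.dvd_prod_of_mem _ (Finset.mem_univ j)
    rw [hm, pow_mul]
    exact Equiv.Perm.pow_apply_eq_self_of_apply_eq_self (pow_orbit_card_apply σ j) m
  -- the projection of a pair of fixed vectors
  have hkey : ∀ u w : Fin n → F, permAct σ u = u → permAct σ w = w →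
      eInner u w = (l : F) * eInner (projPi σ u) (projPi σ w) := by
    intro u w hu hw
    rw [eInner_fixed σ hu hw]
    unfold eInner projPi
    rw [Finset.mul_sum]
    refine Finset.sum_congr rfl fun c _ => ?_
    rw [CharP.natCast_eq_natCast' F p (hcyc c.out)]
  ext x
  simp only [Set.mem_inter_iff, Set.mem_singleton_iff]
  constructor
  · rintro ⟨⟨w, ⟨hwC, hwfix⟩, rfl⟩, hxd⟩
    -- show w ∈ C ∩ C^⊥
    have hwdual : w ∈ dualSet (C : Set (Fin n → F)) := by
      intro v hv
      -- the averaged vector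
      set Av : Fin n → F := ∑ k ∈ Finset.range L, permAct (σ ^ k) v with hAv
      have hmem : ∀ k : ℕ, permAct (σ ^ k) v ∈ C := by
        intro k
        induction k with
        | zero => rw [show permAct (σ ^ 0) v = v from funext fun i => congrArg v (Equiv.Perm.one_apply i)]; exact hv
        | succ k ih =>
          rw [permAct_pow_succ]
          exact (hC _).mp ih
      have hAvC : Av ∈ C := Submodule.sum_mem _ fun k _ => hmem k
      have hAvfix : permAct σ Av = Av := by
        funext j
        have hAvap : ∀ j', Av j' = ∑ k ∈ Finset.range L, v ((σ ^ k) j') := by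
          intro j'
          rw [hAv]
          simp [permAct, Finset.sum_apply]
        have hA1 : permAct σ Av j = ∑ k ∈ Finset.range L, v ((σ ^ (k + 1)) j) := by
          rw [permAct, hAvap (σ j)]
          refine Finset.sum_congr rfl fun k _ => ?_
          rw [pow_succ, Equiv.Perm.mul_apply]
        rw [hA1, hAvap j]
        have h1 := Finset.sum_range_succ' (fun k => v ((σ ^ k) j)) L
        have h2 := Finset.sum_range_succ (fun k => v ((σ ^ k) j)) L
        have hLj : v ((σ ^ L) j) = v ((σ ^ 0) j) := by rw [hfixL j, pow_zero]; simp
        have := h1.symm.trans h2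
        rw [hLj] at this
        exact add_right_cancel this
      have hπAv : projPi σ Av ∈ projPi σ '' fixedCode σ C :=
        ⟨Av, ⟨hAvC, hAvfix⟩, rfl⟩
      have hinner0 : eInner (projPi σ w) (projPi σ Av) = 0 := hxd _ hπAv
      have hwAv : eInner w Av = 0 := by
        rw [hkey w Av hwfix hAvfix, hinner0, mul_zero]
      -- eInner w Av = L • eInner w v
      have hLsum : eInner w Av = (L : F) * eInner w v := by
        have hterm : ∀ k : ℕ, eInner w (permAct (σ ^ k) v) = eInner w v := by
          intro k
          induction k with
          | zero =>
            have h0 : permAct ((σ : Equiv.Perm (Fin n)) ^ 0) v = v :=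
              funext fun i => congrArg v (Equiv.Perm.one_apply i)
            rw [h0]
          | succ k ih =>
            rw [permAct_pow_succ, eInner_permAct hwfix, ih]
        calc eInner w Av = ∑ i, w i * ∑ k ∈ Finset.range L, permAct (σ ^ k) v i := by
              unfold eInner
              refine Finset.sum_congr rfl fun i _ => ?_
              rw [hAv]
              simp [Finset.sum_apply]
          _ = ∑ k ∈ Finset.range L, ∑ i, w i * permAct (σ ^ k) v i := by
              simp_rw [Finset.mul_sum]
              rw [Finset.sum_comm]
          _ = ∑ k ∈ Finset.range L, eInner w v := Finset.sum_congr rfl fun k _ => hterm k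
          _ = (L : F) * eInner w v := by
              rw [Finset.sum_const, Finset.card_range, nsmul_eq_mul]
      rw [hwAv] at hLsum
      exact (mul_eq_zero.mp hLsum.symm).resolve_left hLF
    have hmem0 : w ∈ (C : Set (Fin n → F)) ∩ dualSet (C : Set (Fin n → F)) := ⟨hwC, hwdual⟩
    rw [h] at hmem0
    have hw0 : w = 0 := hmem0
    rw [hw0]
    rfl
  · rintro rfl
    refine ⟨⟨0, ⟨Submodule.zero_mem C, rfl⟩, rfl⟩, ?_⟩
    intro v hv
    simp [eInner]
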